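/- Let 𝓕 be an ω-closed family of nonempty inductive subsets of ℕ. Then every automorphism of the semigroup B_ω^𝓕 is the identity map; in particular, the automorphism group of B_ω^𝓕 is trivial. -/
import Mathlib


/-- The shift `s + F = {s + k : k ∈ F}` of a set of naturals by an integer,
taken as a subset of `ℕ`. -/
def natShift (s : ℤ) (F : Set ℕ) : Set ℕ := {m : ℕ | ∃ k ∈ F, (m : ℤ) = s + (k : ℤ)}

/-- `[k) = {i : ℕ | k ≤ i}`. -/
def upSet (k : ℕ) : Set ℕ := {i : ℕ | k ≤ i}

/-- A subset `F ⊆ ℕ` is inductive if `i ∈ F` implies `i + 1 ∈ F`. -/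
def IsInductiveSet (F : Set ℕ) : Prop := ∀ i ∈ F, i + 1 ∈ F

/-- A nonempty family `𝓕` of subsets of `ℕ` is `ω`-closed if
`F₁ ∩ (−n + F₂) ∈ 𝓕` for all `n ∈ ℕ` and `F₁, F₂ ∈ 𝓕`. -/
def IsOmegaClosed (𝓕 : Set (Set ℕ)) : Prop :=
  𝓕.Nonempty ∧ ∀ (n : ℕ), ∀ F₁ ∈ 𝓕, ∀ F₂ ∈ 𝓕, F₁ ∩ natShift (-(n : ℤ)) F₂ ∈ 𝓕

/-- A bundled `ω`-closed family of subsets of `ℕ`. -/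
structure OmegaFamily : Type where
  sets : Set (Set ℕ)
  closed : IsOmegaClosed sets

/-- The family consists of nonempty inductive subsets of `ℕ`. -/
def InductiveNonempty (𝓕 : OmegaFamily) : Prop :=
  ∀ F ∈ 𝓕.sets, F.Nonempty ∧ IsInductiveSet F

/-- The multiplication of `B_ω^𝓕` on raw triples `(i, j, F)`. -/
def bfMulRaw (x y : ℕ × ℕ × Set ℕ) : ℕ × ℕ × Set ℕ :=
  if x.2.1 < y.1 then
    (x.1 + (y.1 - x.2.1), y.2.1, natShift ((x.2.1 : ℤ) - (y.1 : ℤ)) x.2.2 ∩ y.2.2)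
  else if x.2.1 = y.1 then (x.1, y.2.1, x.2.2 ∩ y.2.2)
  else (x.1, (x.2.1 - y.1) + y.2.1, x.2.2 ∩ natShift ((y.1 : ℤ) - (x.2.1 : ℤ)) y.2.2)

lemma natShift_zero (F : Set ℕ) : natShift 0 F = F := by
  ext m; simp [natShift]

/-- The underlying set of the semigroup `B_ω^𝓕`. -/
def BF (𝓕 : OmegaFamily) : Type := {p : ℕ × ℕ × Set ℕ // p.2.2 ∈ 𝓕.sets}

lemma bfMulRaw_mem (𝓕 : OmegaFamily) {x y : ℕ × ℕ × Set ℕ}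
    (hx : x.2.2 ∈ 𝓕.sets) (hy : y.2.2 ∈ 𝓕.sets) : (bfMulRaw x y).2.2 ∈ 𝓕.sets := by
  obtain ⟨i₁, j₁, F₁⟩ := x
  obtain ⟨i₂, j₂, F₂⟩ := y
  simp only [bfMulRaw]
  split_ifs with h h'
  · have e : ((j₁ : ℤ) - (i₂ : ℤ)) = -(((i₂ - j₁ : ℕ)) : ℤ) := by omega
    simp only []
    rw [e, Set.inter_comm]
    exact 𝓕.closed.2 _ _ hy _ hx
  · have e : (F₁ ∩ F₂ : Set ℕ) = F₁ ∩ natShift (-((0 : ℕ) : ℤ)) F₂ := by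
      simp [natShift_zero]
    simp only []
    rw [e]
    exact 𝓕.closed.2 0 _ hx _ hy
  · have e : ((i₂ : ℤ) - (j₁ : ℤ)) = -(((j₁ - i₂ : ℕ)) : ℤ) := by omega
    simp only []
    rw [e]
    exact 𝓕.closed.2 _ _ hx _ hy

/-- The multiplication of the semigroup `B_ω^𝓕`. -/
instance (𝓕 : OmegaFamily) : Mul (BF 𝓕) :=
  ⟨fun x y => ⟨bfMulRaw x.1 y.1, bfMulRaw_mem 𝓕 x.2 y.2⟩⟩

/-- The bicyclic monoid on `ℕ × ℕ`. -/
def Bicyclic : Type := ℕ × ℕ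

instance : Mul Bicyclic :=
  ⟨fun a b => ((a.1 + b.1 - min a.2 b.1, a.2 + b.2 - min a.2 b.1) : ℕ × ℕ)⟩


lemma upSet_mem {a m : ℕ} : m ∈ upSet a ↔ a ≤ m := Iff.rfl

lemma upSet_inj {a b : ℕ} (h : upSet a = upSet b) : a = b := by
  have h1 : a ∈ upSet b := h ▸ (le_refl a : a ∈ upSet a)
  have h2 : b ∈ upSet a := h.symm ▸ (le_refl b : b ∈ upSet b)
  exact le_antisymm h2 h1

lemma upSet_eq_iff {a b : ℕ} : upSet a = upSet b ↔ a = b :=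
  ⟨upSet_inj, fun h => h ▸ rfl⟩

lemma upSet_inter (a b : ℕ) : upSet a ∩ upSet b = upSet (max a b) := by
  ext m; simp only [upSet, Set.mem_inter_iff, Set.mem_setOf_eq]; omega

lemma natShift_upSet (s : ℤ) (a : ℕ) : natShift s (upSet a) = upSet (s + a).toNat := by
  ext m
  simp only [natShift, upSet, Set.mem_setOf_eq]
  constructor
  · rintro ⟨k, hk, hm⟩; omega
  · intro h; exact ⟨((m : ℤ) - s).toNat, by omega, by omega⟩

lemma sInf_upSet (k : ℕ) : sInf (upSet k) = k := by
  have h1 : sInf (upSet k) ∈ upSet k := Nat.sInf_mem ⟨k, le_refl k⟩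
  exact le_antisymm (Nat.sInf_le (le_refl k)) h1

lemma eq_upSet {F : Set ℕ} (hne : F.Nonempty) (hI : IsInductiveSet F) :
    F = upSet (sInf F) := by
  have key : ∀ j : ℕ, sInf F + j ∈ F := by
    intro j
    induction j with
    | zero => simpa using Nat.sInf_mem hne
    | succ n ih => exact hI _ ih
  ext m
  constructor
  · intro hm; exact Nat.sInf_le hm
  · intro hm
    have := key (m - sInf F)
    have hle : sInf F ≤ m := hm
    rwa [Nat.add_sub_cancel' hle] at this

/-- canonical element -/
def el (𝓕 : OmegaFamily) (i j k : ℕ) (h : upSet k ∈ 𝓕.sets) : BF 𝓕 := ⟨(i, j, upSet k), h⟩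

lemma el_inj {𝓕 : OmegaFamily} {i j k i' j' k' : ℕ} {h h'}
    (he : el 𝓕 i j k h = el 𝓕 i' j' k' h') : i = i' ∧ j = j' ∧ k = k' := by
  have := congrArg Subtype.val he
  simp only [el, Prod.mk.injEq] at this
  exact ⟨this.1, this.2.1, upSet_inj this.2.2⟩

lemma el_congr {𝓕 : OmegaFamily} {i j k i' j' k' : ℕ} {h : upSet k ∈ 𝓕.sets}
    (hi : i = i') (hj : j = j') (hk : k = k') :
    el 𝓕 i j k h = el 𝓕 i' j' k' (hk ▸ h) := by
  subst hi; subst hj; subst hk; rfl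

lemma el_mul_val (𝓕 : OmegaFamily) (i₁ j₁ k₁ i₂ j₂ k₂ : ℕ) (h₁ h₂) :
    (el 𝓕 i₁ j₁ k₁ h₁ * el 𝓕 i₂ j₂ k₂ h₂).1 =
      (i₁ + (i₂ - j₁), j₂ + (j₁ - i₂), upSet (max (k₁ - (i₂ - j₁)) (k₂ - (j₁ - i₂)))) := by
  show bfMulRaw (i₁, j₁, upSet k₁) (i₂, j₂, upSet k₂) = _
  dsimp only [bfMulRaw]
  split_ifs with h h' <;>
    simp only [natShift_upSet, upSet_inter, Prod.mk.injEq, upSet_eq_iff, true_and, and_true] <;> omega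

lemma mul_el (𝓕 : OmegaFamily) (i₁ j₁ k₁ i₂ j₂ k₂ : ℕ) (h₁ h₂) :
    ∃ h', el 𝓕 i₁ j₁ k₁ h₁ * el 𝓕 i₂ j₂ k₂ h₂
      = el 𝓕 (i₁ + (i₂ - j₁)) (j₂ + (j₁ - i₂)) (max (k₁ - (i₂ - j₁)) (k₂ - (j₁ - i₂))) h' := by
  have hv := el_mul_val 𝓕 i₁ j₁ k₁ i₂ j₂ k₂ h₁ h₂
  have hmem := (el 𝓕 i₁ j₁ k₁ h₁ * el 𝓕 i₂ j₂ k₂ h₂).2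
  rw [hv] at hmem
  exact ⟨hmem, Subtype.ext hv⟩

lemma decomp {𝓕 : OmegaFamily} (hind : InductiveNonempty 𝓕) (x : BF 𝓕) :
    ∃ i j k h, x = el 𝓕 i j k h := by
  obtain ⟨⟨i, j, F⟩, hF⟩ := x
  have hup : F = upSet (sInf F) := eq_upSet (hind F hF).1 (hind F hF).2
  refine ⟨i, j, sInf F, by rw [← hup]; exact hF, ?_⟩
  exact Subtype.ext (by simp only [el]; rw [← hup])



lemma el_eq {𝓕 : OmegaFamily} {i j k i' j' k' : ℕ} (h : upSet k ∈ 𝓕.sets)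
    (h' : upSet k' ∈ 𝓕.sets) (hi : i = i') (hj : j = j') (hk : k = k') :
    el 𝓕 i j k h = el 𝓕 i' j' k' h' := by
  subst hi; subst hj; subst hk; rfl

lemma mul_el_eq {𝓕 : OmegaFamily} (i₁ j₁ k₁ i₂ j₂ k₂ I J L : ℕ) (h₁ h₂)
    (h₃ : upSet L ∈ 𝓕.sets)
    (hI : I = i₁ + (i₂ - j₁)) (hJ : J = j₂ + (j₁ - i₂))
    (hL : L = max (k₁ - (i₂ - j₁)) (k₂ - (j₁ - i₂))) :
    el 𝓕 i₁ j₁ k₁ h₁ * el 𝓕 i₂ j₂ k₂ h₂ = el 𝓕 I J L h₃ := by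
  obtain ⟨h', he⟩ := mul_el 𝓕 i₁ j₁ k₁ i₂ j₂ k₂ h₁ h₂
  rw [he]; exact el_eq _ _ hI.symm hJ.symm hL.symm

lemma mul_el_ex {𝓕 : OmegaFamily} (i₁ j₁ k₁ i₂ j₂ k₂ I J L : ℕ) (h₁ h₂)
    (hI : I = i₁ + (i₂ - j₁)) (hJ : J = j₂ + (j₁ - i₂))
    (hL : L = max (k₁ - (i₂ - j₁)) (k₂ - (j₁ - i₂))) :
    ∃ h₃, el 𝓕 i₁ j₁ k₁ h₁ * el 𝓕 i₂ j₂ k₂ h₂ = el 𝓕 I J L h₃ := by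
  subst hI; subst hJ; subst hL; exact mul_el 𝓕 i₁ j₁ k₁ i₂ j₂ k₂ h₁ h₂

theorem statement17 (𝓕 : OmegaFamily) (hind : InductiveNonempty 𝓕)
    (e : BF 𝓕 ≃* BF 𝓕) :
    ∀ x : BF 𝓕, e x = x := by
  classical
  -- the minimal parameter k₀
  obtain ⟨F₀, hF₀⟩ := 𝓕.closed.1
  have hK_ne : {k : ℕ | upSet k ∈ 𝓕.sets}.Nonempty := by
    refine ⟨sInf F₀, ?_⟩
    show upSet (sInf F₀) ∈ 𝓕.sets
    rw [← eq_upSet (hind F₀ hF₀).1 (hind F₀ hF₀).2]; exact hF₀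
  set k₀ := sInf {k : ℕ | upSet k ∈ 𝓕.sets} with hk₀def
  have hk₀ : upSet k₀ ∈ 𝓕.sets := Nat.sInf_mem hK_ne
  have hk₀le : ∀ k : ℕ, upSet k ∈ 𝓕.sets → k₀ ≤ k := fun k hk => Nat.sInf_le hk
  -- idempotents
  have idem : ∀ (i k : ℕ) (hk : upSet k ∈ 𝓕.sets),
      el 𝓕 i i k hk * el 𝓕 i i k hk = el 𝓕 i i k hk := fun i k hk =>
    mul_el_eq i i k i i k i i k hk hk hk (by omega) (by omega) (by omega)
  have idem_char : ∀ (u v w : ℕ) (hw : upSet w ∈ 𝓕.sets),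
      el 𝓕 u v w hw * el 𝓕 u v w hw = el 𝓕 u v w hw → u = v := by
    intro u v w hw h
    obtain ⟨h', he⟩ := mul_el 𝓕 u v w u v w hw hw
    obtain ⟨e1, e2, _⟩ := el_inj (he.symm.trans h)
    omega
  -- ε is a two-sided identity
  have mul_eps : ∀ (i j k : ℕ) (hk : upSet k ∈ 𝓕.sets),
      el 𝓕 i j k hk * el 𝓕 0 0 k₀ hk₀ = el 𝓕 i j k hk := by
    intro i j k hk
    have hle := hk₀le k hk
    exact mul_el_eq i j k 0 0 k₀ i j k hk hk₀ hk (by omega) (by omega) (by omega)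
  have eps_mul : ∀ (i j k : ℕ) (hk : upSet k ∈ 𝓕.sets),
      el 𝓕 0 0 k₀ hk₀ * el 𝓕 i j k hk = el 𝓕 i j k hk := by
    intro i j k hk
    have hle := hk₀le k hk
    exact mul_el_eq 0 0 k₀ i j k i j k hk₀ hk hk (by omega) (by omega) (by omega)
  have mul_eps_any : ∀ x : BF 𝓕, x * el 𝓕 0 0 k₀ hk₀ = x := by
    intro x
    obtain ⟨i, j, k, hk, hx⟩ := decomp hind x
    rw [hx]; exact mul_eps i j k hk
  have eps_mul_any : ∀ x : BF 𝓕, el 𝓕 0 0 k₀ hk₀ * x = x := by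
    intro x
    obtain ⟨i, j, k, hk, hx⟩ := decomp hind x
    rw [hx]; exact eps_mul i j k hk
  -- e fixes ε
  have hφε : e (el 𝓕 0 0 k₀ hk₀) = el 𝓕 0 0 k₀ hk₀ := by
    calc e (el 𝓕 0 0 k₀ hk₀)
        = e (el 𝓕 0 0 k₀ hk₀) * el 𝓕 0 0 k₀ hk₀ := (mul_eps_any _).symm
      _ = e (el 𝓕 0 0 k₀ hk₀) * e (e.symm (el 𝓕 0 0 k₀ hk₀)) := by
            rw [MulEquiv.apply_symm_apply]
      _ = e (el 𝓕 0 0 k₀ hk₀ * e.symm (el 𝓕 0 0 k₀ hk₀)) := (map_mul e _ _).symm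
      _ = e (e.symm (el 𝓕 0 0 k₀ hk₀)) := by rw [eps_mul_any]
      _ = el 𝓕 0 0 k₀ hk₀ := MulEquiv.apply_symm_apply e _
  -- analysis of the images of t = el 0 1 k₀ and s = el 1 0 k₀
  obtain ⟨a, b, l, hl, hyt⟩ := decomp hind (e (el 𝓕 0 1 k₀ hk₀))
  obtain ⟨c', d', m, hm, hzs⟩ := decomp hind (e (el 𝓕 1 0 k₀ hk₀))
  have hts : el 𝓕 0 1 k₀ hk₀ * el 𝓕 1 0 k₀ hk₀ = el 𝓕 0 0 k₀ hk₀ :=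
    mul_el_eq 0 1 k₀ 1 0 k₀ 0 0 k₀ hk₀ hk₀ hk₀ (by omega) (by omega) (by omega)
  have h1 : e (el 𝓕 0 1 k₀ hk₀) * e (el 𝓕 1 0 k₀ hk₀) = el 𝓕 0 0 k₀ hk₀ := by
    rw [← map_mul, hts, hφε]
  rw [hyt, hzs] at h1
  obtain ⟨hh, hprod⟩ := mul_el 𝓕 a b l c' d' m hl hm
  rw [hprod] at h1
  obtain ⟨e1, e2, e3⟩ := el_inj h1
  have hl0 : k₀ ≤ l := hk₀le l hl
  have hm0 : k₀ ≤ m := hk₀le m hm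
  have hyt' : e (el 𝓕 0 1 k₀ hk₀) = el 𝓕 0 b k₀ hk₀ := by
    rw [hyt]; exact el_eq _ _ (by omega) rfl (by omega)
  have hzs' : e (el 𝓕 1 0 k₀ hk₀) = el 𝓕 b 0 k₀ hk₀ := by
    rw [hzs]; exact el_eq _ _ (by omega) (by omega) (by omega)
  have hb1 : 1 ≤ b := by
    by_contra hb0
    have hb0' : b = 0 := by omega
    have : e (el 𝓕 0 1 k₀ hk₀) = e (el 𝓕 0 0 k₀ hk₀) := by
      rw [hyt', hφε]; exact el_eq _ _ rfl hb0' rfl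
    have := e.injective this
    obtain ⟨_, h10, _⟩ := el_inj this
    omega
  -- images of powers
  have hrow0 : ∀ n : ℕ, e (el 𝓕 n 0 k₀ hk₀) = el 𝓕 (n * b) 0 k₀ hk₀ := by
    intro n
    induction n with
    | zero => simpa using hφε
    | succ n ih =>
      have hid : el 𝓕 1 0 k₀ hk₀ * el 𝓕 n 0 k₀ hk₀ = el 𝓕 (n + 1) 0 k₀ hk₀ :=
        mul_el_eq 1 0 k₀ n 0 k₀ (n+1) 0 k₀ hk₀ hk₀ hk₀ (by omega) (by omega) (by omega)
      have := congrArg e hid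
      rw [map_mul, hzs', ih] at this
      rw [← this]
      exact mul_el_eq b 0 k₀ (n*b) 0 k₀ ((n+1)*b) 0 k₀ hk₀ hk₀ hk₀
        (by ring_nf; omega) (by omega) (by omega)
  have hcol0 : ∀ n : ℕ, e (el 𝓕 0 n k₀ hk₀) = el 𝓕 0 (n * b) k₀ hk₀ := by
    intro n
    induction n with
    | zero => simpa using hφε
    | succ n ih =>
      have hid : el 𝓕 0 n k₀ hk₀ * el 𝓕 0 1 k₀ hk₀ = el 𝓕 0 (n + 1) k₀ hk₀ :=
        mul_el_eq 0 n k₀ 0 1 k₀ 0 (n+1) k₀ hk₀ hk₀ hk₀ (by omega) (by omega) (by omega)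
      have := congrArg e hid
      rw [map_mul, hyt', ih] at this
      rw [← this]
      exact mul_el_eq 0 (n*b) k₀ 0 b k₀ 0 ((n+1)*b) k₀ hk₀ hk₀ hk₀
        (by omega) (by ring_nf; omega) (by omega)
  -- the functions p and c on parameters
  have h0 : ∀ k, ∀ hk : upSet k ∈ 𝓕.sets, ∃ p c : ℕ, ∃ hc : upSet c ∈ 𝓕.sets,
      e (el 𝓕 0 0 k hk) = el 𝓕 p p c hc := by
    intro k hk
    obtain ⟨u, v, w, hw, hew⟩ := decomp hind (e (el 𝓕 0 0 k hk))
    have hid : e (el 𝓕 0 0 k hk) * e (el 𝓕 0 0 k hk) = e (el 𝓕 0 0 k hk) := by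
      rw [← map_mul, idem 0 k hk]
    rw [hew] at hid
    have huv : u = v := idem_char u v w hw hid
    exact ⟨u, w, hw, by rw [hew]; exact el_eq _ _ rfl huv.symm rfl⟩
  choose p c hc hpc using h0
  have hpk₀ : p k₀ hk₀ = 0 ∧ c k₀ hk₀ = k₀ := by
    have := (hpc k₀ hk₀).symm.trans hφε
    obtain ⟨e1, _, e3⟩ := el_inj this
    exact ⟨e1, e3⟩
  have hcge : ∀ k hk, k₀ ≤ c k hk := fun k hk => hk₀le _ (hc k hk)
  -- rows, columns, and general idempotents
  have hrow : ∀ (i k : ℕ) (hk : upSet k ∈ 𝓕.sets),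
      e (el 𝓕 i 0 k hk) = el 𝓕 (i * b + p k hk) (p k hk) (c k hk) (hc k hk) := by
    intro i k hk
    induction i with
    | zero => rw [hpc k hk]; exact el_eq _ _ (by omega) rfl rfl
    | succ i ih =>
      have hle := hk₀le k hk
      have hid : el 𝓕 1 0 k₀ hk₀ * el 𝓕 i 0 k hk = el 𝓕 (i + 1) 0 k hk :=
        mul_el_eq 1 0 k₀ i 0 k (i+1) 0 k hk₀ hk hk (by omega) (by omega) (by omega)
      have h2 := congrArg e hid
      rw [map_mul, hzs', ih] at h2
      rw [← h2]
      exact mul_el_eq b 0 k₀ (i*b + p k hk) (p k hk) (c k hk) ((i+1)*b + p k hk)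
        (p k hk) (c k hk) hk₀ (hc k hk) (hc k hk)
        (by ring_nf; omega) (by omega) (by have := hcge k hk; omega)
  have hcol : ∀ (i k : ℕ) (hk : upSet k ∈ 𝓕.sets),
      e (el 𝓕 0 i k hk) = el 𝓕 (p k hk) (i * b + p k hk) (c k hk) (hc k hk) := by
    intro i k hk
    induction i with
    | zero => rw [hpc k hk]; exact el_eq _ _ rfl (by omega) rfl
    | succ i ih =>
      have hle := hk₀le k hk
      have hid : el 𝓕 0 i k hk * el 𝓕 0 1 k₀ hk₀ = el 𝓕 0 (i + 1) k hk :=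
        mul_el_eq 0 i k 0 1 k₀ 0 (i+1) k hk hk₀ hk (by omega) (by omega) (by omega)
      have h2 := congrArg e hid
      rw [map_mul, hyt', ih] at h2
      rw [← h2]
      exact mul_el_eq (p k hk) (i*b + p k hk) (c k hk) 0 b k₀ (p k hk)
        ((i+1)*b + p k hk) (c k hk) (hc k hk) hk₀ (hc k hk)
        (by omega) (by ring_nf; omega) (by have := hcge k hk; omega)
  have hE : ∀ (i k : ℕ) (hk : upSet k ∈ 𝓕.sets),
      e (el 𝓕 i i k hk) = el 𝓕 (i * b + p k hk) (i * b + p k hk) (c k hk) (hc k hk) := by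
    intro i k hk
    have hid : el 𝓕 i 0 k hk * el 𝓕 0 i k hk = el 𝓕 i i k hk :=
      mul_el_eq i 0 k 0 i k i i k hk hk hk (by omega) (by omega) (by omega)
    have h2 := congrArg e hid
    rw [map_mul, hrow i k hk, hcol i k hk] at h2
    rw [← h2]
    exact mul_el_eq (i*b + p k hk) (p k hk) (c k hk) (p k hk) (i*b + p k hk) (c k hk)
      (i*b + p k hk) (i*b + p k hk) (c k hk) (hc k hk) (hc k hk) (hc k hk)
      (by omega) (by omega) (by omega)
  -- preimages of idempotents
  have hpre : ∀ (i' k' : ℕ) (hk' : upSet k' ∈ 𝓕.sets), ∃ i k hk,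
      i * b + p k hk = i' ∧ c k hk = k' := by
    intro i' k' hk'
    obtain ⟨u, v, w, hw, hew⟩ := decomp hind (e.symm (el 𝓕 i' i' k' hk'))
    have hid2 : e.symm (el 𝓕 i' i' k' hk') * e.symm (el 𝓕 i' i' k' hk')
        = e.symm (el 𝓕 i' i' k' hk') := by
      rw [← map_mul, idem i' k' hk']
    rw [hew] at hid2
    have huv : u = v := idem_char u v w hw hid2
    subst huv
    have h3 : e (el 𝓕 u u w hw) = el 𝓕 i' i' k' hk' := by
      rw [← hew, MulEquiv.apply_symm_apply]
    rw [hE u w hw] at h3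
    obtain ⟨f1, _, f3⟩ := el_inj h3
    exact ⟨u, w, hw, f1, f3⟩
  -- b = 1
  have hb : b = 1 := by
    by_contra hbne
    have hb2 : 2 ≤ b := by omega
    -- an element k1 with p k1 = 1, c k1 = k₀
    obtain ⟨i1, k1, hk1, hpk1, hck1⟩ := hpre 1 k₀ hk₀
    have hi1 : i1 = 0 := by
      by_contra hi1
      have h1 : 1 ≤ i1 := by omega
      have := Nat.mul_le_mul_right b h1
      omega
    have hp1 : p k1 hk1 = 1 := by rw [hi1] at hpk1; omega
    -- for each k' in the index set, a preimage z with p = 0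
    have hZ : ∀ k' (hk' : upSet k' ∈ 𝓕.sets), ∃ k hk, p k hk = 0 ∧ c k hk = k' := by
      intro k' hk'
      obtain ⟨i, k, hk, h1, h2⟩ := hpre 0 k' hk'
      exact ⟨k, hk, by omega, h2⟩
    choose z hz hz0 hzc using hZ
    -- every z is < k1
    have hlt : ∀ k' (hk' : upSet k' ∈ 𝓕.sets), z k' hk' < k1 := by
      intro k' hk'
      by_contra hge
      have hge' : k1 ≤ z k' hk' := by omega
      have hMeq : max (z k' hk') k1 = z k' hk' := by omega
      -- identity: el 0 0 z * el 0 0 k1 = el 0 0 (max z k1)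
      obtain ⟨hM, hidm⟩ := mul_el_ex 0 0 (z k' hk') 0 0 k1 0 0 (max (z k' hk') k1)
        (hz k' hk') hk1 (by omega) (by omega) (by omega)
      have h2 := congrArg e hidm
      rw [map_mul, hpc, hpc, hz0 k' hk', hp1] at h2
      obtain ⟨hprod', h3⟩ := mul_el 𝓕 0 0 (c (z k' hk') (hz k' hk')) 1 1 (c k1 hk1)
        (hc _ _) (hc _ _)
      rw [h3, hpc] at h2
      obtain ⟨g1, _, _⟩ := el_inj h2
      -- g1 : p (max z k1) hM = 0 + (1 - 0) = 1
      have h4 : el 𝓕 0 0 (max (z k' hk') k1) hM = el 𝓕 0 0 (z k' hk') (hz k' hk') :=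
        el_eq _ _ rfl rfl hMeq
      have h5 := congrArg e h4
      rw [hpc, hpc] at h5
      obtain ⟨g2, _, _⟩ := el_inj h5
      rw [hz0 k' hk'] at g2
      omega
    -- finiteness contradiction
    set T : Set ℕ := {k : ℕ | upSet k ∈ 𝓕.sets} with hT
    set g : ℕ → ℕ := fun k' => if h : upSet k' ∈ 𝓕.sets then z k' h else 0 with hg
    have hginj : Set.InjOn g T := by
      intro x hx y hy hxy
      have hx' : upSet x ∈ 𝓕.sets := hx
      have hy' : upSet y ∈ 𝓕.sets := hy
      rw [hg] at hxy
      simp only [hx', hy', dif_pos] at hxy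
      -- c (z x) = x, c (z y) = y
      have hcx := hzc x hx'
      have hcy := hzc y hy'
      have : el 𝓕 0 0 (z x hx') (hz x hx') = el 𝓕 0 0 (z y hy') (hz y hy') :=
        el_eq _ _ rfl rfl hxy
      have h6 := congrArg e this
      rw [hpc, hpc] at h6
      obtain ⟨_, _, g3⟩ := el_inj h6
      rw [hcx, hcy] at g3
      exact g3
    have hgmap : ∀ x ∈ T, g x ∈ T ∧ g x < k1 ∧ g x ≠ k1 := by
      intro x hx
      have hx' : upSet x ∈ 𝓕.sets := hx
      have : g x = z x hx' := by rw [hg]; simp [hx']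
      refine ⟨by rw [this]; exact hz x hx', by rw [this]; exact hlt x hx', ?_⟩
      rw [this]
      intro hzeq
      have : el 𝓕 0 0 (z x hx') (hz x hx') = el 𝓕 0 0 k1 hk1 := el_eq _ _ rfl rfl hzeq
      have h7 := congrArg e this
      rw [hpc, hpc] at h7
      obtain ⟨g4, _, _⟩ := el_inj h7
      rw [hz0 x hx', hp1] at g4
      omega
    have himfin : (g '' T).Finite := by
      apply Set.Finite.subset (Set.finite_Iio k1)
      rintro _ ⟨x, hx, rfl⟩
      exact (hgmap x hx).2.1
    have hTfin : T.Finite := Set.Finite.of_finite_image himfin hginj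
    have hk1T : k1 ∈ T := hk1
    have hss : g '' T ⊂ T := by
      rw [Set.ssubset_iff_of_subset]
      · exact ⟨k1, hk1T, by rintro ⟨x, hx, hgx⟩; exact (hgmap x hx).2.2 hgx⟩
      · rintro _ ⟨x, hx, rfl⟩; exact (hgmap x hx).1
    have hcard1 : (g '' T).ncard = T.ncard := Set.ncard_image_of_injOn hginj
    have hcard2 : (g '' T).ncard < T.ncard := Set.ncard_lt_ncard hss hTfin
    omega
  -- p vanishes identically
  have hp0 : ∀ k (hk : upSet k ∈ 𝓕.sets), p k hk = 0 := by
    intro k hk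
    by_contra hpn
    have hp1 : 1 ≤ p k hk := by omega
    have hle := hk₀le k hk
    -- identity: el 0 0 k * el 1 1 k₀ = el 1 1 (max (k-1) k₀)
    obtain ⟨hM, hidm⟩ := mul_el_ex 0 0 k 1 1 k₀ 1 1 (max (k - 1) k₀) hk hk₀
      (by omega) (by omega) (by omega)
    have h2 := congrArg e hidm
    have hE1 : e (el 𝓕 1 1 k₀ hk₀) = el 𝓕 1 1 k₀ hk₀ := by
      rw [hE 1 k₀ hk₀]
      exact el_eq _ _ (by rw [hb]; omega) (by rw [hb]; omega) hpk₀.2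
    rw [map_mul, hpc, hE1, hE 1 (max (k-1) k₀) hM] at h2
    -- compute the product el P P C * el 1 1 k₀ = el P P C
    have h3 : el 𝓕 (p k hk) (p k hk) (c k hk) (hc k hk) * el 𝓕 1 1 k₀ hk₀
        = el 𝓕 (p k hk) (p k hk) (c k hk) (hc k hk) :=
      mul_el_eq (p k hk) (p k hk) (c k hk) 1 1 k₀ (p k hk) (p k hk) (c k hk)
        (hc k hk) hk₀ (hc k hk) (by omega) (by omega) (by have := hcge k hk; omega)
    rw [h3] at h2
    -- so e (el 0 0 k) = e (el 1 1 (max (k-1) k₀)); injectivity gives 0 = 1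
    have h4 : e (el 𝓕 0 0 k hk) = e (el 𝓕 1 1 (max (k-1) k₀) hM) := by
      rw [hpc, hE 1 (max (k-1) k₀) hM, ← h2]
    have h5 := e.injective h4
    obtain ⟨g1, _, _⟩ := el_inj h5
    omega
  -- c is the identity
  have cinj : ∀ k hk k' hk', c k hk = c k' hk' → k = k' := by
    intro k hk k' hk' hcc
    have : e (el 𝓕 0 0 k hk) = e (el 𝓕 0 0 k' hk') := by
      rw [hpc, hpc]
      exact el_eq _ _ (by rw [hp0, hp0]) (by rw [hp0, hp0]) hcc
    obtain ⟨_, _, g3⟩ := el_inj (e.injective this)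
    exact g3
  have cid : ∀ k (hk : upSet k ∈ 𝓕.sets), c k hk = k := by
    intro k
    induction k using Nat.strong_induction_on with
    | _ k IH =>
      intro hk
      obtain ⟨i, k'', hk'', _, hc''⟩ := hpre 0 k hk
      rcases lt_trichotomy k'' k with hltk | heq | hgtk
      · have := IH k'' hltk hk''
        omega
      · subst heq; exact hc''
      · -- k < k'' : show c k < c k'' and derive a contradiction
        have hMeq : max k k'' = k'' := by omega
        obtain ⟨hM, hidm⟩ := mul_el_ex 0 0 k 0 0 k'' 0 0 (max k k'') hk hk''
          (by omega) (by omega) (by omega)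
        have h2 := congrArg e hidm
        rw [map_mul, hpc, hpc, hpc] at h2
        obtain ⟨hprod', h3⟩ := mul_el 𝓕 (p k hk) (p k hk) (c k hk)
          (p k'' hk'') (p k'' hk'') (c k'' hk'') (hc _ _) (hc _ _)
        rw [h3] at h2
        obtain ⟨_, _, g3⟩ := el_inj h2
        rw [hp0, hp0] at g3
        -- g3 : max (c k - 0) (c k'' - 0) = c (max k k'') hM
        have h4 : el 𝓕 0 0 (max k k'') hM = el 𝓕 0 0 k'' hk'' := el_eq _ _ rfl rfl hMeq
        have h5 := congrArg e h4
        rw [hpc, hpc] at h5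
        obtain ⟨_, _, g4⟩ := el_inj h5
        -- so max (c k) (c k'') = c k''
        have hlecc : c k hk ≤ c k'' hk'' := by omega
        have hnecc : c k hk ≠ c k'' hk'' := by
          intro hcc; have := cinj k hk k'' hk'' hcc; omega
        have hltcc : c k hk < c k'' hk'' := by omega
        -- c k'' = k, so c k < k
        have hckk : c k hk < k := by omega
        have h6 := IH (c k hk) hckk (hc k hk)
        have h7 := cinj (c k hk) (hc k hk) k hk h6
        omega
  -- all idempotents are fixed
  have hfix : ∀ (i k : ℕ) (hk : upSet k ∈ 𝓕.sets), e (el 𝓕 i i k hk) = el 𝓕 i i k hk := by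
    intro i k hk
    rw [hE i k hk]
    exact el_eq _ _ (by rw [hb, hp0]; omega) (by rw [hb, hp0]; omega) (cid k hk)
    -- conclusion for an arbitrary element
  intro x
  obtain ⟨i, j, k, hk, hx⟩ := decomp hind x
  rw [hx]
  obtain ⟨A, B, L, hL, hy⟩ := decomp hind (e (el 𝓕 i j k hk))
  obtain ⟨A', B', L', hL', hz⟩ := decomp hind (e (el 𝓕 j i k hk))
  -- identities in BF
  have I1 : el 𝓕 i i k hk * el 𝓕 i j k hk = el 𝓕 i j k hk :=
    mul_el_eq i i k i j k i j k hk hk hk (by omega) (by omega) (by omega)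
  have I2 : el 𝓕 i j k hk * el 𝓕 j j k hk = el 𝓕 i j k hk :=
    mul_el_eq i j k j j k i j k hk hk hk (by omega) (by omega) (by omega)
  have I1' : el 𝓕 j j k hk * el 𝓕 j i k hk = el 𝓕 j i k hk :=
    mul_el_eq j j k j i k j i k hk hk hk (by omega) (by omega) (by omega)
  have I2' : el 𝓕 j i k hk * el 𝓕 i i k hk = el 𝓕 j i k hk :=
    mul_el_eq j i k i i k j i k hk hk hk (by omega) (by omega) (by omega)
  have I3 : el 𝓕 i j k hk * el 𝓕 j i k hk = el 𝓕 i i k hk :=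
    mul_el_eq i j k j i k i i k hk hk hk (by omega) (by omega) (by omega)
  have I4 : el 𝓕 j i k hk * el 𝓕 i j k hk = el 𝓕 j j k hk :=
    mul_el_eq j i k i j k j j k hk hk hk (by omega) (by omega) (by omega)
  -- apply e
  have J1 := congrArg e I1
  rw [map_mul, hfix, hy] at J1
  obtain ⟨q1, hq1⟩ := mul_el 𝓕 i i k A B L hk hL
  rw [hq1] at J1
  obtain ⟨E1a, E1b, E1c⟩ := el_inj J1
  have J2 := congrArg e I2
  rw [map_mul, hfix, hy] at J2
  obtain ⟨q2, hq2⟩ := mul_el 𝓕 A B L j j k hL hk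
  rw [hq2] at J2
  obtain ⟨E2a, E2b, E2c⟩ := el_inj J2
  have J1' := congrArg e I1'
  rw [map_mul, hfix, hz] at J1'
  obtain ⟨q3, hq3⟩ := mul_el 𝓕 j j k A' B' L' hk hL'
  rw [hq3] at J1'
  obtain ⟨E3a, E3b, E3c⟩ := el_inj J1'
  have J2' := congrArg e I2'
  rw [map_mul, hfix, hz] at J2'
  obtain ⟨q4, hq4⟩ := mul_el 𝓕 A' B' L' i i k hL' hk
  rw [hq4] at J2'
  obtain ⟨E4a, E4b, E4c⟩ := el_inj J2'
  have J3 := congrArg e I3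
  rw [map_mul, hfix, hy, hz] at J3
  obtain ⟨q5, hq5⟩ := mul_el 𝓕 A B L A' B' L' hL hL'
  rw [hq5] at J3
  obtain ⟨F1, F2, F3⟩ := el_inj J3
  have J4 := congrArg e I4
  rw [map_mul, hfix, hy, hz] at J4
  obtain ⟨q6, hq6⟩ := mul_el 𝓕 A' B' L' A B L hL' hL
  rw [hq6] at J4
  obtain ⟨G1, G2, G3⟩ := el_inj J4
  rw [hy]
  exact el_eq _ _ (by omega) (by omega) (by omega)
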